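/- For an arbitrary countable locally standard measure algebra (H,μ), the spectrum Spec((H,μ)) is a saturated set of Steinitz numbers. -/

import Mathlib

open scoped BigOperators

noncomputable section

/-! ### Steinitz numbers -/

/-- A Steinitz number: a formal product `∏ p ^ r_p` over all primes, with exponents
`r_p ∈ ℕ ∪ {∞}`, encoded as the function sending each prime to its exponent. -/
def SteinitzNumber : Type := Nat.Primes → ℕ∞

namespace SteinitzNumber

instance : One SteinitzNumber := ⟨fun _ => 0⟩

instance : Mul SteinitzNumber := ⟨fun s t p => s p + t p⟩

/-- The Steinitz number associated with a positive integer `n`. -/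
def ofNat (n : ℕ) : SteinitzNumber := fun p => (n.factorization p : ℕ∞)

/-- `b ∈ Ω(s)`: the positive integer `b` divides the Steinitz number `s`. -/
def NatDvd (b : ℕ) (s : SteinitzNumber) : Prop :=
  0 < b ∧ ∀ p : Nat.Primes, (b.factorization p : ℕ∞) ≤ s p

/-- The quotient `s / b` of a Steinitz number by a positive integer dividing it. -/
def divNat (s : SteinitzNumber) (b : ℕ) : SteinitzNumber :=
  fun p => s p - (b.factorization p : ℕ∞)

/-- An infinite Steinitz number is one which is not a positive integer. -/
def Infinite (s : SteinitzNumber) : Prop := ∀ n : ℕ, s ≠ ofNat n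

/-- Steinitz numbers `s` and `t` are rationally connected: `t = (a/b)·s` for positive
integers `a, b` (expressed by cross multiplication). -/
def RationallyConnected (s t : SteinitzNumber) : Prop :=
  ∃ a b : ℕ, 0 < a ∧ 0 < b ∧ ofNat b * t = ofNat a * s

/-- `s₁` finitely divides `s₂`: `s₁ = s₂ / b` for some `b ∈ Ω(s₂)`. -/
def FinDvd (s₁ s₂ : SteinitzNumber) : Prop :=
  ∃ b : ℕ, NatDvd b s₂ ∧ ofNat b * s₁ = s₂

/-- `s₁ ≤ s₂` iff `s₁ = (a/b)·s₂` with `b ∈ Ω(s₂)` and `1 ≤ a ≤ b`. -/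
def Le (s₁ s₂ : SteinitzNumber) : Prop :=
  ∃ a b : ℕ, 0 < a ∧ a ≤ b ∧ NatDvd b s₂ ∧ ofNat b * s₁ = ofNat a * s₂

/-- A saturated set of Steinitz numbers. -/
def Saturated (S : Set SteinitzNumber) : Prop :=
  (∀ s₁ ∈ S, ∀ s₂ ∈ S, RationallyConnected s₁ s₂) ∧
  (∀ s₂ ∈ S, ∀ s₁, FinDvd s₁ s₂ → s₁ ∈ S) ∧
  (∀ s ∈ S, ∀ n : ℕ, ofNat n * s ∈ S → ∀ k : ℕ, 1 ≤ k → k ≤ n → ofNat k * s ∈ S)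

/-- `S(∞, s) = { (a/b)·s : a ∈ ℕ, b ∈ Ω(s) }`. -/
def SInf (s : SteinitzNumber) : Set SteinitzNumber :=
  {t | ∃ a b : ℕ, 0 < a ∧ NatDvd b s ∧ ofNat b * t = ofNat a * s}

/-- `S(r, s) = { (a/b)·s : a, b ∈ ℕ, b ∈ Ω(s), a ≤ r·b }`. -/
def SBdd (r : ℝ) (s : SteinitzNumber) : Set SteinitzNumber :=
  {t | ∃ a b : ℕ, 0 < a ∧ NatDvd b s ∧ (a : ℝ) ≤ r * b ∧ ofNat b * t = ofNat a * s}

/-- `S⁺(r, s) = { (a/b)·s : a, b ∈ ℕ, b ∈ Ω(s), a < r·b }`. -/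
def SBddPlus (r : ℝ) (s : SteinitzNumber) : Set SteinitzNumber :=
  {t | ∃ a b : ℕ, 0 < a ∧ NatDvd b s ∧ (a : ℝ) < r * b ∧ ofNat b * t = ofNat a * s}

end SteinitzNumber

/-! ### Measure algebras -/

/-- A measure algebra: a Boolean algebra (an associative, commutative algebra over `𝔽₂`
in which every element is idempotent) equipped with a measure `μ` which is positive on
nonzero elements and additive on orthogonal pairs. -/
structure MeasureAlgebra : Type 1 where
  carrier : Type
  [ring : NonUnitalCommRing carrier]
  idem : ∀ x : carrier, x * x = x
  mu : carrier → ℝ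
  mu_nonneg : ∀ a, 0 ≤ mu a
  mu_eq_zero_iff : ∀ a, mu a = 0 ↔ a = 0
  mu_add : ∀ a b : carrier, a * b = 0 → mu (a + b) = mu a + mu b

attribute [instance] MeasureAlgebra.ring

namespace MeasureAlgebra

/-- Isomorphism of measure algebras: a Boolean algebra isomorphism preserving the measures. -/
def Isomorphic (H₁ H₂ : MeasureAlgebra) : Prop :=
  ∃ φ : H₁.carrier ≃+* H₂.carrier, ∀ a, H₂.mu (φ a) = H₁.mu a

/-- Scalar equivalence of measure algebras: a Boolean algebra isomorphism multiplying
the measure by a positive constant `α`. -/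
def ScalarEquivalent (H₁ H₂ : MeasureAlgebra) : Prop :=
  ∃ α : ℝ, 0 < α ∧ ∃ φ : H₁.carrier ≃+* H₂.carrier, ∀ a, H₂.mu (φ a) = α * H₁.mu a

/-- The measure subalgebra of a measure algebra supported on a subring, with the
restricted measure. -/
def restrict (H : MeasureAlgebra) (S : NonUnitalSubring H.carrier) : MeasureAlgebra where
  carrier := S
  idem := fun x => Subtype.ext (H.idem x.1)
  mu := fun x => H.mu x.1
  mu_nonneg := fun a => H.mu_nonneg a.1
  mu_eq_zero_iff := fun a => by
    rw [H.mu_eq_zero_iff a.1]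
    exact ⟨fun h => Subtype.ext h, fun h => congrArg Subtype.val h⟩
  mu_add := fun a b hab => H.mu_add a.1 b.1 (congrArg Subtype.val hab)

/-- The standard measure algebra `Stₙ = 𝔽₂ⁿ` with `μ(x₁, …, xₙ) = (x₁ + ⋯ + xₙ)/n`. -/
def St (n : ℕ) : MeasureAlgebra where
  carrier := Fin n → ZMod 2
  idem := fun x => funext fun i => by
    have h : ∀ a : ZMod 2, a * a = a := by decide
    exact h (x i)
  mu := fun x => (∑ i, ((x i).val : ℝ)) / n
  mu_nonneg := fun a => by positivity
  mu_eq_zero_iff := fun a => by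
    constructor
    · intro h
      rcases Nat.eq_zero_or_pos n with hn | hn
      · subst hn; exact funext fun i => i.elim0
      · have hne : ((n : ℝ)) ≠ 0 := by positivity
        have h2 : (∑ i, ((a i).val : ℝ)) = 0 := by
          rcases div_eq_zero_iff.mp h with h' | h'
          · exact h'
          · exact absurd h' hne
        have h3 := (Finset.sum_eq_zero_iff_of_nonneg
          (fun i _ => by positivity : ∀ i ∈ Finset.univ, (0:ℝ) ≤ ((a i).val : ℝ))).mp h2
        funext i
        have h4 : ((a i).val : ℝ) = 0 := h3 i (Finset.mem_univ i)
        have h5 : (a i).val = 0 := by exact_mod_cast h4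
        exact (ZMod.val_eq_zero _).mp h5
    · intro h; subst h; simp
  mu_add := fun a b hab => by
    have key : ∀ u v : ZMod 2, u * v = 0 → (u + v).val = u.val + v.val := by decide
    have h : ∀ i, (((a + b) i).val : ℝ) = ((a i).val : ℝ) + ((b i).val : ℝ) := by
      intro i
      have h0 : a i * b i = 0 := congrFun hab i
      have h1 := key (a i) (b i) h0
      show (((a i + b i)).val : ℝ) = _
      rw [h1]
      push_cast
      ring
    show (∑ i, (((a + b) i).val : ℝ)) / n
        = (∑ i, ((a i).val : ℝ)) / n + (∑ i, ((b i).val : ℝ)) / n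
    rw [← add_div, ← Finset.sum_add_distrib]
    congr 1
    exact Finset.sum_congr rfl fun i _ => h i

/-- A measure algebra is unital if it has an identity element of measure `1`. -/
def Unital (H : MeasureAlgebra) : Prop :=
  ∃ e : H.carrier, (∀ x, e * x = x) ∧ H.mu e = 1

/-- A measure algebra is locally standard if every finite subset is contained in a
measure subalgebra scalar equivalent to a standard one. -/
def LocallyStandard (H : MeasureAlgebra) : Prop :=
  ∀ t : Finset H.carrier, ∃ (S : NonUnitalSubring H.carrier) (n : ℕ), 0 < n ∧
    (↑t : Set H.carrier) ⊆ S ∧ (H.restrict S).ScalarEquivalent (St n)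

/-- For an (idempotent) element `h`, the subring `hH = {x | h·x = x}`. -/
def cornerSubring (H : MeasureAlgebra) (h : H.carrier) : NonUnitalSubring H.carrier where
  carrier := {x | h * x = x}
  zero_mem' := mul_zero h
  add_mem' := by
    intro a b ha hb
    simp only [Set.mem_setOf_eq] at *
    rw [mul_add, ha, hb]
  neg_mem' := by
    intro a ha
    simp only [Set.mem_setOf_eq] at *
    rw [mul_neg, ha]
  mul_mem' := by
    intro a b ha hb
    simp only [Set.mem_setOf_eq] at *
    rw [← mul_assoc, ha]

/-- The unital measure algebra `H_h = (hH, μ(·)/μ(h))`. -/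
def corner (H : MeasureAlgebra) (h : H.carrier) : MeasureAlgebra where
  carrier := H.cornerSubring h
  idem := fun x => Subtype.ext (H.idem x.1)
  mu := fun x => H.mu x.1 / H.mu h
  mu_nonneg := fun a => div_nonneg (H.mu_nonneg a.1) (H.mu_nonneg h)
  mu_eq_zero_iff := fun a => by
    constructor
    · intro ha
      rcases div_eq_zero_iff.mp ha with h' | h'
      · exact Subtype.ext ((H.mu_eq_zero_iff a.1).mp h')
      · have hh : h = 0 := (H.mu_eq_zero_iff h).mp h'
        have h2 : h * (a : H.carrier) = a := a.2
        apply Subtype.ext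
        show (a : H.carrier) = 0
        generalize hx : (a : H.carrier) = x at h2 ⊢
        rw [← h2, hh, zero_mul]
    · intro h'
      subst h'
      have h0 : H.mu ((0 : H.cornerSubring h) : H.carrier) = 0 :=
        (H.mu_eq_zero_iff _).mpr rfl
      show H.mu ((0 : H.cornerSubring h) : H.carrier) / H.mu h = 0
      rw [h0, zero_div]
  mu_add := fun a b hab => by
    have : H.mu ((a : H.carrier) + b) = H.mu a + H.mu b :=
      H.mu_add a.1 b.1 (congrArg Subtype.val hab)
    show H.mu ((a + b : H.cornerSubring h) : H.carrier) / H.mu h = _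
    rw [show ((a + b : H.cornerSubring h) : H.carrier) = (a : H.carrier) + b from rfl,
      this, add_div]

/-- `D(H)`: the set of `n` such that `H` has a subalgebra containing the identity of `H`
and isomorphic to the standard measure algebra `Stₙ`. -/
def D (H : MeasureAlgebra) : Set ℕ :=
  {n | ∃ S : NonUnitalSubring H.carrier,
    (∃ e ∈ S, ∀ x : H.carrier, e * x = x) ∧ (H.restrict S).Isomorphic (St n)}

/-- The Steinitz number `st(H)` of a (unital locally standard) measure algebra:
the least common multiple of `D(H)`. -/
def st (H : MeasureAlgebra) : SteinitzNumber :=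
  fun p => ⨆ n ∈ H.D, (n.factorization p : ℕ∞)

/-- The spectrum of a measure algebra: the set of Steinitz numbers `st(H_h)` for `h ≠ 0`. -/
def Spec (H : MeasureAlgebra) : Set SteinitzNumber :=
  {s | ∃ h : H.carrier, h ≠ 0 ∧ (H.corner h).st = s}

end MeasureAlgebra

namespace SteinitzNumber

lemma mul_apply (s t : SteinitzNumber) (p : Nat.Primes) : (s * t) p = s p + t p := rfl

lemma ofNat_apply (n : ℕ) (p : Nat.Primes) : ofNat n p = (n.factorization p : ℕ∞) := rfl

lemma mul_comm' (s t : SteinitzNumber) : s * t = t * s :=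
  funext fun p => add_comm (s p) (t p)

lemma mul_assoc' (s t u : SteinitzNumber) : s * t * u = s * (t * u) :=
  funext fun p => add_assoc (s p) (t p) (u p)

lemma ofNat_mul_ofNat {a b : ℕ} (ha : a ≠ 0) (hb : b ≠ 0) :
    ofNat a * ofNat b = ofNat (a * b) := by
  funext p
  show (a.factorization p : ℕ∞) + (b.factorization p : ℕ∞) = ((a*b).factorization p : ℕ∞)
  rw [Nat.factorization_mul ha hb, Finsupp.add_apply]
  push_cast
  ring

lemma ofNat_one_mul (s : SteinitzNumber) : ofNat 1 * s = s := by
  funext p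
  show ((1:ℕ).factorization p : ℕ∞) + s p = s p
  simp

lemma cancel {c : ℕ} (hc : c ≠ 0) {s t : SteinitzNumber}
    (h : ofNat c * s = ofNat c * t) : s = t := by
  funext p
  have hp := congrFun h p
  have h1 : (c.factorization p : ℕ∞) + s p = (c.factorization p : ℕ∞) + t p := hp
  exact WithTop.add_left_cancel (by exact_mod_cast WithTop.coe_ne_top) h1

lemma fact_le_of_dvd {a b : ℕ} (ha : a ≠ 0) (hb : b ≠ 0) (h : a ∣ b) (p : Nat.Primes) :
    a.factorization p ≤ b.factorization p :=
  (Nat.factorization_le_iff_dvd ha hb).mpr h p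

end SteinitzNumber
namespace MeasureAlgebra

variable (H : MeasureAlgebra)

lemma mu_pos {h : H.carrier} (hh : h ≠ 0) : 0 < H.mu h :=
  lt_of_le_of_ne (H.mu_nonneg h) (fun e => hh ((H.mu_eq_zero_iff h).mp e.symm))

lemma add_self (x : H.carrier) : x + x = 0 := by
  have h1 : (x + x) * (x + x) = x + x := H.idem _
  have h2 : (x + x) * (x + x) = (x + x) + (x + x) := by
    rw [mul_add, add_mul, H.idem]
  have h3 : (x + x) + (x + x) = 0 + (x + x) := by rw [← h2, h1, zero_add]
  exact add_right_cancel h3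

/-- `h` is divisible into `n` equal-measure orthogonal pieces. -/
def Div (h : H.carrier) (n : ℕ) : Prop :=
  ∃ f : Fin n → H.carrier, (∀ i, h * f i = f i) ∧
    (∀ i j, i ≠ j → f i * f j = 0) ∧ (∑ i, f i = h) ∧
    (∀ i, H.mu (f i) = H.mu h / n)

/-- measure is additive on pairwise-orthogonal finite families -/
lemma mu_sum {ι : Type*} (t : Finset ι) (f : ι → H.carrier)
    (horth : ∀ i ∈ t, ∀ j ∈ t, i ≠ j → f i * f j = 0) :
    H.mu (∑ i ∈ t, f i) = ∑ i ∈ t, H.mu (f i) := by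
  classical
  induction t using Finset.induction_on with
  | empty => simp [(H.mu_eq_zero_iff 0).mpr rfl]
  | @insert a t ha ih =>
    rw [Finset.sum_insert ha, Finset.sum_insert ha]
    rw [H.mu_add _ _ ?ortho]
    · rw [ih (fun i hi j hj hij => horth i (Finset.mem_insert_of_mem hi) j
        (Finset.mem_insert_of_mem hj) hij)]
    case ortho =>
      rw [Finset.mul_sum]
      apply Finset.sum_eq_zero
      intro j hj
      exact horth a (Finset.mem_insert_self a t) j (Finset.mem_insert_of_mem hj)
        (fun e => ha (e ▸ hj))

lemma div_one {h : H.carrier} : H.Div h 1 := by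
  refine ⟨fun _ => h, fun i => H.idem h, fun i j hij => absurd (Subsingleton.elim i j) hij,
    by simp, fun i => by simp⟩

end MeasureAlgebra
namespace SpecAux

abbrev V (N : ℕ) := Fin N → ZMod 2

/-- weight: number of ones -/
def w {N : ℕ} (x : V N) : ℕ := ∑ i, (x i).val

lemma zmod2_key : ∀ u v : ZMod 2, u * v = 0 → (u + v).val = u.val + v.val := by decide

lemma zmod2_eq_zero : ∀ u : ZMod 2, u ≠ 1 → u = 0 := by decide

lemma w_add {N : ℕ} {x y : V N} (h : x * y = 0) : w (x + y) = w x + w y := by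
  unfold w
  rw [← Finset.sum_add_distrib]
  exact Finset.sum_congr rfl fun i _ => zmod2_key (x i) (y i) (congrFun h i)

lemma eq_zero_of_w_eq_zero {N : ℕ} {x : V N} (h : w x = 0) : x = 0 := by
  unfold w at h
  rw [Finset.sum_eq_zero_iff] at h
  funext i
  have := h i (Finset.mem_univ i)
  exact (ZMod.val_eq_zero _).mp this

lemma exists_one_of_w_pos {N : ℕ} {x : V N} (h : 0 < w x) : ∃ i, x i = 1 := by
  by_contra hc
  push_neg at hc
  have : x = 0 := funext fun i => zmod2_eq_zero _ (hc i)
  rw [this] at h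
  simp [w] at h

/-- single coordinate indicator -/
def single {N : ℕ} (i : Fin N) : V N := fun m => if m = i then 1 else 0

lemma w_single {N : ℕ} (i : Fin N) : w (single i) = 1 := by
  unfold w single
  rw [Finset.sum_eq_single i]
  · simp only [if_pos rfl]; decide
  · intro b _ hb; simp [hb]
  · intro hi; exact absurd (Finset.mem_univ i) hi

lemma split {N : ℕ} (x : V N) : ∀ k : ℕ, k ≤ w x →
    ∃ y : V N, x * y = y ∧ w y = k := by
  intro k
  induction k with
  | zero => intro _; exact ⟨0, by funext i; simp, by simp [w]⟩
  | succ k ih =>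
    intro hk
    obtain ⟨y, hxy, hwy⟩ := ih (le_of_lt (Nat.lt_of_succ_le hk))
    -- y is orthogonal complement inside x : consider z = x + y
    have hyy : y * y = y := by
      funext i
      have : ∀ u : ZMod 2, u * u = u := by decide
      exact this (y i)
    have hyz : y * (x + y) = 0 := by
      rw [mul_add, mul_comm y x, hxy, hyy]
      funext i
      show y i + y i = 0
      have : ∀ u : ZMod 2, u + u = 0 := by decide
      exact this (y i)
    have hwz : w y + w (x + y) = w x := by
      have hsum : y + (x + y) = x := by
        funext i
        show y i + (x i + y i) = x i
        have : ∀ u v : ZMod 2, u + (v + u) = v := by decide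
        exact this (y i) (x i)
      rw [← w_add hyz, hsum]
    have hpos : 0 < w (x + y) := by omega
    obtain ⟨i, hi⟩ := exists_one_of_w_pos hpos
    have hxi : x i = 1 := by
      have h1 : x i + y i = 1 := hi
      have : ∀ u v : ZMod 2, v = u * v → u + v = 1 → u = 1 := by decide
      exact this (x i) (y i) (congrFun hxy i).symm h1
    have hyi : y i = 0 := by
      have h1 : x i + y i = 1 := hi
      rw [hxi] at h1
      have : ∀ v : ZMod 2, 1 + v = 1 → v = 0 := by decide
      exact this _ h1
    refine ⟨y + single i, ?_, ?_⟩
    · rw [mul_add, hxy]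
      congr 1
      funext m
      show x m * single i m = single i m
      unfold single
      by_cases hm : m = i
      · subst hm; simp [hxi]
      · simp [hm]
    · have horth : y * single i = 0 := by
        funext m
        show y m * single i m = 0
        unfold single
        by_cases hm : m = i
        · subst hm; simp [hyi]
        · simp [hm]
      rw [w_add horth, hwy, w_single]

lemma partition {N : ℕ} : ∀ (d : ℕ) (q : ℕ) (x : V N), w x = d * q →
    ∃ g : Fin d → V N, (∀ j, x * g j = g j) ∧
      (∀ j k, j ≠ k → g j * g k = 0) ∧ (∑ j, g j = x) ∧ (∀ j, w (g j) = q) := by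
  intro d
  induction d with
  | zero =>
    intro q x hx
    have : x = 0 := eq_zero_of_w_eq_zero (by simpa using hx)
    exact ⟨fun j => j.elim0, fun j => j.elim0, fun j => j.elim0, by simp [this],
      fun j => j.elim0⟩
  | succ d ih =>
    intro q x hx
    have hx' : w x = d * q + q := by rw [hx]; ring
    obtain ⟨y, hxy, hwy⟩ := split x q (by omega)
    set z := x + y with hz
    have hyy : y * y = y := by
      funext i
      have : ∀ u : ZMod 2, u * u = u := by decide
      exact this (y i)
    have hyz : y * z = 0 := by
      rw [hz, mul_add, mul_comm y x, hxy, hyy]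
      funext i
      show y i + y i = 0
      have : ∀ u : ZMod 2, u + u = 0 := by decide
      exact this (y i)
    have hsum : y + z = x := by
      funext i
      show y i + (x i + y i) = x i
      have : ∀ u v : ZMod 2, u + (v + u) = v := by decide
      exact this (y i) (x i)
    have hxz : x * z = z := by
      rw [hz, mul_add, hxy]
      have hxx : x * x = x := by
        funext i
        have : ∀ u : ZMod 2, u * u = u := by decide
        exact this (x i)
      rw [hxx]
    have hwz : w z = d * q := by
      have h2 := w_add hyz
      rw [hsum] at h2
      omega
    obtain ⟨g', hg1, hg2, hg3, hg4⟩ := ih q z hwz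
    have horth0 : ∀ k', y * g' k' = 0 := by
      intro k'
      rw [← hg1 k', ← mul_assoc, hyz]
      funext i; simp
    refine ⟨Fin.cons y g', ?_, ?_, ?_, ?_⟩
    · intro j
      rcases Fin.eq_zero_or_eq_succ j with rfl | ⟨j', rfl⟩
      · rw [Fin.cons_zero]; exact hxy
      · rw [Fin.cons_succ]
        rw [← hg1 j', ← mul_assoc, hxz]
    · intro j k hjk
      rcases Fin.eq_zero_or_eq_succ j with rfl | ⟨j', rfl⟩ <;>
        rcases Fin.eq_zero_or_eq_succ k with rfl | ⟨k', rfl⟩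
      · exact absurd rfl hjk
      · rw [Fin.cons_zero, Fin.cons_succ]; exact horth0 k'
      · rw [Fin.cons_zero, Fin.cons_succ, mul_comm]; exact horth0 j'
      · rw [Fin.cons_succ, Fin.cons_succ]
        exact hg2 j' k' (fun e => hjk (congrArg Fin.succ e))
    · rw [Fin.sum_cons, hg3, hsum]
    · intro j
      rcases Fin.eq_zero_or_eq_succ j with rfl | ⟨j', rfl⟩
      · rw [Fin.cons_zero]; exact hwy
      · rw [Fin.cons_succ]; exact hg4 j'

end SpecAux
namespace MeasureAlgebra

open SpecAux

lemma exists_chart (H : MeasureAlgebra) (hls : H.LocallyStandard) (t : Finset H.carrier) :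
    ∃ (N : ℕ) (β : ℝ) (ι : V N → H.carrier), 0 < β ∧
      Function.Injective ι ∧ (∀ x y, ι (x + y) = ι x + ι y) ∧
      (∀ x y, ι (x * y) = ι x * ι y) ∧ (∀ x, H.mu (ι x) = β * w x) ∧
      (↑t : Set H.carrier) ⊆ Set.range ι := by
  obtain ⟨S, n, hn, hsub, α, hα, φ, hφ⟩ := hls t
  refine ⟨n, 1 / (n * α), fun x => (φ.symm x).1, by positivity, ?_, ?_, ?_, ?_, ?_⟩
  · intro x y hxy
    exact φ.symm.injective (Subtype.ext hxy)
  · intro x y; show (φ.symm (x + y)).1 = _; exact congrArg Subtype.val (map_add φ.symm x y)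
  · intro x y; show (φ.symm (x * y)).1 = _; exact congrArg Subtype.val (map_mul φ.symm x y)
  · intro x
    have h1 := hφ (φ.symm x)
    rw [show φ (φ.symm x) = x from φ.apply_symm_apply x] at h1
    have h2 : (St n).mu x = (∑ i, ((x i).val : ℝ)) / n := rfl
    have h3 : (restrict H S).mu (φ.symm x) = H.mu (φ.symm x).1 := rfl
    have hw : (∑ i, ((x i).val : ℝ)) = (w x : ℝ) := by
      rw [w]; push_cast; ring
    have hn0 : (0:ℝ) < n := by exact_mod_cast hn
    rw [h2, h3, hw] at h1
    field_simp at h1 ⊢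
    linarith
  · intro x hx
    obtain ⟨y, hy⟩ : ∃ y : V n, φ.symm y = ((⟨x, hsub hx⟩ : S) : (restrict H S).carrier) :=
      ⟨φ ⟨x, hsub hx⟩, φ.symm_apply_apply _⟩
    exact ⟨y, by show (φ.symm y).1 = x; rw [hy]⟩

lemma master (H : MeasureAlgebra) (hls : H.LocallyStandard) (t : Finset H.carrier) :
    ∃ (β : ℝ) (cnt : H.carrier → ℕ), 0 < β ∧
      (∀ h ∈ t, H.mu h = β * cnt h) ∧
      (∀ h ∈ t, ∀ d : ℕ, 0 < d → d ∣ cnt h → H.Div h d) ∧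
      (∀ h ∈ t, ∀ g ∈ t, ∀ n : ℕ, 0 < n → H.mu g = H.mu h / n → n * cnt g = cnt h) := by
  classical
  obtain ⟨N, β, ι, hβ, hinj, hadd, hmul, hmu, hrange⟩ := H.exists_chart hls t
  have hι0 : ι 0 = 0 := by
    have h1 : ι 0 + ι 0 = ι 0 + 0 := by rw [← hadd, add_zero, add_zero]
    exact add_left_cancel h1
  let A : V N →+ H.carrier := AddMonoidHom.mk' ι hadd
  set cnt : H.carrier → ℕ := fun h => if hh : h ∈ Set.range ι then w hh.choose else 0
    with hcnt
  have hkey : ∀ h ∈ t, ∃ x : V N, ι x = h ∧ cnt h = w x := by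
    intro h ht
    have hh : h ∈ Set.range ι := hrange ht
    exact ⟨hh.choose, hh.choose_spec, by rw [hcnt]; simp only [dif_pos hh]⟩
  refine ⟨β, cnt, hβ, ?_, ?_, ?_⟩
  · intro h ht
    obtain ⟨x, hx, hc⟩ := hkey h ht
    rw [hc, ← hx, hmu]
  · intro h ht d hd hdvd
    obtain ⟨x, hx, hc⟩ := hkey h ht
    obtain ⟨q, hq⟩ := hdvd
    have hwx : w x = d * q := by rw [← hc, hq]
    obtain ⟨g, hg1, hg2, hg3, hg4⟩ := partition d q x hwx
    refine ⟨fun j => ι (g j), ?_, ?_, ?_, ?_⟩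
    · intro j; rw [← hx, ← hmul, hg1 j]
    · intro i j hij; rw [← hmul, hg2 i j hij, hι0]
    · have : ∑ j, ι (g j) = ι (∑ j, g j) := (map_sum A g Finset.univ).symm
      rw [this, hg3, hx]
    · intro j
      rw [hmu, hg4 j, ← hx, hmu, hwx]
      have hd0 : (d:ℝ) ≠ 0 := by positivity
      push_cast
      field_simp
  · intro h ht g hg n hn hμ
    obtain ⟨x, hx, hcx⟩ := hkey h ht
    obtain ⟨y, hy, hcy⟩ := hkey g hg
    have h1 : H.mu g = β * w y := by rw [← hy, hmu]
    have h2 : H.mu h = β * w x := by rw [← hx, hmu]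
    rw [h1, h2] at hμ
    have hn0 : (n:ℝ) ≠ 0 := by positivity
    have : (n : ℝ) * w y = w x := by
      field_simp at hμ
      nlinarith [hβ]
    have h4 : (n * w y : ℕ) = (w x : ℕ) := by exact_mod_cast this
    rw [hcx, hcy, h4]

end MeasureAlgebra
namespace MeasureAlgebra

open SpecAux SteinitzNumber

/-- the set of equal-measure divisibility degrees of `h` -/
def DS (H : MeasureAlgebra) (h : H.carrier) : Set ℕ := {n | 0 < n ∧ H.Div h n}

/-- the Steinitz number of `h` computed via `DS` -/
def stH (H : MeasureAlgebra) (h : H.carrier) : SteinitzNumber :=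
  fun p => ⨆ n ∈ H.DS h, (n.factorization p : ℕ∞)

variable (H : MeasureAlgebra)

lemma one_mem_DS (h : H.carrier) : 1 ∈ H.DS h := ⟨one_pos, H.div_one⟩

lemma DS_nonempty (h : H.carrier) : (H.DS h).Nonempty := ⟨1, H.one_mem_DS h⟩

lemma dvd_mem_DS (hls : H.LocallyStandard) {h : H.carrier} {n d : ℕ}
    (hn : n ∈ H.DS h) (hd : 0 < d) (hdvd : d ∣ n) : d ∈ H.DS h := by
  classical
  obtain ⟨hnpos, f, hf1, hf2, hf3, hf4⟩ := hn
  set t : Finset H.carrier := insert h (Finset.image f Finset.univ) with ht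
  obtain ⟨β, cnt, hβ, hc1, hc2, hc3⟩ := H.master hls t
  have hht : h ∈ t := Finset.mem_insert_self _ _
  have hft : f ⟨0, hnpos⟩ ∈ t :=
    Finset.mem_insert_of_mem (Finset.mem_image_of_mem f (Finset.mem_univ _))
  have hn_dvd : n ∣ cnt h := by
    have := hc3 h hht (f ⟨0, hnpos⟩) hft n hnpos (hf4 _)
    exact ⟨cnt (f ⟨0, hnpos⟩), this.symm⟩
  exact ⟨hd, hc2 h hht d hd (hdvd.trans hn_dvd)⟩

lemma lcm_mem_DS (hls : H.LocallyStandard) {h : H.carrier} {n m : ℕ}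
    (hn : n ∈ H.DS h) (hm : m ∈ H.DS h) : lcm n m ∈ H.DS h := by
  classical
  obtain ⟨hnpos, f, hf1, hf2, hf3, hf4⟩ := hn
  obtain ⟨hmpos, g, hg1, hg2, hg3, hg4⟩ := hm
  set t : Finset H.carrier :=
    insert h (Finset.image f Finset.univ ∪ Finset.image g Finset.univ) with ht
  obtain ⟨β, cnt, hβ, hc1, hc2, hc3⟩ := H.master hls t
  have hht : h ∈ t := Finset.mem_insert_self _ _
  have hft : f ⟨0, hnpos⟩ ∈ t := Finset.mem_insert_of_mem
    (Finset.mem_union_left _ (Finset.mem_image_of_mem f (Finset.mem_univ _)))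
  have hgt : g ⟨0, hmpos⟩ ∈ t := Finset.mem_insert_of_mem
    (Finset.mem_union_right _ (Finset.mem_image_of_mem g (Finset.mem_univ _)))
  have hn_dvd : n ∣ cnt h := ⟨cnt (f ⟨0, hnpos⟩),
    (hc3 h hht (f ⟨0, hnpos⟩) hft n hnpos (hf4 _)).symm⟩
  have hm_dvd : m ∣ cnt h := ⟨cnt (g ⟨0, hmpos⟩),
    (hc3 h hht (g ⟨0, hmpos⟩) hgt m hmpos (hg4 _)).symm⟩
  have hlcm_pos : 0 < lcm n m := Nat.pos_of_ne_zero (Nat.lcm_ne_zero hnpos.ne' hmpos.ne')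
  exact ⟨hlcm_pos, hc2 h hht _ hlcm_pos (lcm_dvd hn_dvd hm_dvd)⟩

lemma finset_lcm_mem_DS (hls : H.LocallyStandard) {h : H.carrier} (u : Finset ℕ)
    (hu : ∀ m ∈ u, m ∈ H.DS h) : u.lcm id ∈ H.DS h := by
  classical
  induction u using Finset.induction_on with
  | empty => simpa using H.one_mem_DS h
  | @insert a u ha ih =>
    rw [Finset.lcm_insert]
    exact H.lcm_mem_DS hls (hu a (Finset.mem_insert_self a u))
      (ih fun m hm => hu m (Finset.mem_insert_of_mem hm))

lemma exists_ge_of_le_biSup {D : Set ℕ} (h1 : 1 ∈ D) {k : ℕ} {F : ℕ → ℕ}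
    (hk : (k : ℕ∞) ≤ ⨆ n ∈ D, (F n : ℕ∞)) : ∃ m ∈ D, k ≤ F m := by
  rcases Nat.eq_zero_or_pos k with rfl | hk0
  · exact ⟨1, h1, Nat.zero_le _⟩
  by_contra hc
  push_neg at hc
  have hle : ∀ n ∈ D, (F n : ℕ∞) ≤ ((k - 1 : ℕ) : ℕ∞) := fun n hn => by
    have := hc n hn
    exact_mod_cast Nat.le_sub_one_of_lt this
  have h2 : (⨆ n ∈ D, (F n : ℕ∞)) ≤ ((k - 1 : ℕ) : ℕ∞) := iSup₂_le hle
  have h3 : (k : ℕ∞) ≤ ((k - 1 : ℕ) : ℕ∞) := hk.trans h2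
  have h4 : k ≤ k - 1 := by exact_mod_cast h3
  omega

lemma natdvd_mem_DS (hls : H.LocallyStandard) {h : H.carrier} {b : ℕ} (hb : 0 < b)
    (hdvd : ∀ p : Nat.Primes, (b.factorization p : ℕ∞) ≤ H.stH h p) : b ∈ H.DS h := by
  classical
  have hch : ∀ p : ℕ, ∃ m, m ∈ H.DS h ∧
      (p.Prime → b.factorization p ≤ m.factorization p) := by
    intro p
    by_cases hp : p.Prime
    · obtain ⟨m, hm, hle⟩ := exists_ge_of_le_biSup (H.one_mem_DS h)
        (hdvd ⟨p, hp⟩)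
      exact ⟨m, hm, fun _ => hle⟩
    · exact ⟨1, H.one_mem_DS h, fun hp' => absurd hp' hp⟩
  choose F hF1 hF2 using hch
  set u : Finset ℕ := b.primeFactors.image F with hu
  set L : ℕ := u.lcm id with hL
  have hLmem : L ∈ H.DS h := H.finset_lcm_mem_DS hls u fun m hm => by
    obtain ⟨p, _, rfl⟩ := Finset.mem_image.mp hm
    exact hF1 p
  have hLpos : 0 < L := hLmem.1
  have hbL : b ∣ L := by
    rw [← Nat.factorization_le_iff_dvd hb.ne' hLpos.ne']
    intro p
    by_cases hp : p ∈ b.primeFactors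
    · have hFp : F p ∈ u := Finset.mem_image_of_mem F hp
      have h1 : F p ∣ L := Finset.dvd_lcm (f := id) hFp
      have hFpos : 0 < F p := (hF1 p).1
      calc b.factorization p ≤ (F p).factorization p :=
            hF2 p (Nat.prime_of_mem_primeFactors hp)
        _ ≤ L.factorization p :=
            (Nat.factorization_le_iff_dvd hFpos.ne' hLpos.ne').mpr h1 p
    · have : b.factorization p = 0 := by
        rw [← Nat.support_factorization] at hp
        exact Finsupp.notMem_support_iff.mp hp
      simp [this]
  exact H.dvd_mem_DS hls hLmem hb hbL

lemma ratio_key (hls : H.LocallyStandard) {h₁ h₂ : H.carrier} (h1 : h₁ ≠ 0) (h2 : h₂ ≠ 0)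
    {a b : ℕ} (ha : 0 < a) (hb : 0 < b) (hμ : b * H.mu h₁ = a * H.mu h₂) :
    ∀ n ∈ H.DS h₂, ∃ m ∈ H.DS h₁, ∀ p : Nat.Primes,
      a.factorization p + n.factorization p ≤ b.factorization p + m.factorization p := by
  classical
  rintro n ⟨hnpos, f, hf1, hf2, hf3, hf4⟩
  set t : Finset H.carrier := insert h₁ (insert h₂ {f ⟨0, hnpos⟩}) with ht
  obtain ⟨β, cnt, hβ, hc1, hc2, hc3⟩ := H.master hls t
  have h1t : h₁ ∈ t := Finset.mem_insert_self _ _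
  have h2t : h₂ ∈ t := Finset.mem_insert_of_mem (Finset.mem_insert_self _ _)
  have hft : f ⟨0, hnpos⟩ ∈ t := Finset.mem_insert_of_mem
    (Finset.mem_insert_of_mem (Finset.mem_singleton_self _))
  have hc1pos : 0 < cnt h₁ := by
    by_contra hc
    push_neg at hc
    interval_cases hcc : cnt h₁
    · have := hc1 h₁ h1t
      rw [hcc] at this
      simp at this
      exact h1 ((H.mu_eq_zero_iff h₁).mp this)
  have hc2pos : 0 < cnt h₂ := by
    by_contra hc
    push_neg at hc
    interval_cases hcc : cnt h₂
    · have := hc1 h₂ h2t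
      rw [hcc] at this
      simp at this
      exact h2 ((H.mu_eq_zero_iff h₂).mp this)
  have hmem : cnt h₁ ∈ H.DS h₁ := ⟨hc1pos, hc2 h₁ h1t _ hc1pos dvd_rfl⟩
  have hn_dvd : n ∣ cnt h₂ := ⟨cnt (f ⟨0, hnpos⟩),
    (hc3 h₂ h2t (f ⟨0, hnpos⟩) hft n hnpos (hf4 _)).symm⟩
  have hbc : b * cnt h₁ = a * cnt h₂ := by
    have e1 := hc1 h₁ h1t
    have e2 := hc1 h₂ h2t
    rw [e1, e2] at hμ
    have h5 : β * ((b:ℝ) * cnt h₁) = β * ((a:ℝ) * cnt h₂) := by linear_combination hμ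
    have : (b : ℝ) * cnt h₁ = a * cnt h₂ := mul_left_cancel₀ hβ.ne' h5
    exact_mod_cast this
  refine ⟨cnt h₁, hmem, fun p => ?_⟩
  have key1 : a.factorization p + n.factorization p ≤ a.factorization p +
      (cnt h₂).factorization p :=
    add_le_add le_rfl (fact_le_of_dvd hnpos.ne' hc2pos.ne' hn_dvd p)
  have key2 : a.factorization p + (cnt h₂).factorization p =
      b.factorization p + (cnt h₁).factorization p := by
    have e1 : (a * cnt h₂).factorization = a.factorization + (cnt h₂).factorization :=
      Nat.factorization_mul ha.ne' hc2pos.ne'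
    have e2 : (b * cnt h₁).factorization = b.factorization + (cnt h₁).factorization :=
      Nat.factorization_mul hb.ne' hc1pos.ne'
    have := congrArg (fun m => m.factorization p) hbc
    simp only [e1, e2, Finsupp.add_apply] at this
    omega
  omega

lemma stH_le_side (hls : H.LocallyStandard) {h₁ h₂ : H.carrier} {a b : ℕ}
    (key : ∀ n ∈ H.DS h₂, ∃ m ∈ H.DS h₁, ∀ p : Nat.Primes,
      a.factorization p + n.factorization p ≤ b.factorization p + m.factorization p)
    (p : Nat.Primes) : (ofNat a * H.stH h₂) p ≤ (ofNat b * H.stH h₁) p := by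
  show (a.factorization p : ℕ∞) + H.stH h₂ p ≤ (b.factorization p : ℕ∞) + H.stH h₁ p
  rw [stH, ENat.add_biSup (H.DS_nonempty h₂)]
  apply iSup₂_le
  intro n hn
  obtain ⟨m, hm, hle⟩ := key n hn
  have h1 : (a.factorization p : ℕ∞) + n.factorization p ≤
      (b.factorization p : ℕ∞) + m.factorization p := by exact_mod_cast hle p
  refine h1.trans (add_le_add le_rfl ?_)
  exact le_iSup₂ (f := fun m (_ : m ∈ H.DS h₁) => (m.factorization p : ℕ∞)) m hm

lemma stH_ratio (hls : H.LocallyStandard) {h₁ h₂ : H.carrier} (h1 : h₁ ≠ 0) (h2 : h₂ ≠ 0)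
    {a b : ℕ} (ha : 0 < a) (hb : 0 < b) (hμ : b * H.mu h₁ = a * H.mu h₂) :
    ofNat a * H.stH h₂ = ofNat b * H.stH h₁ := by
  funext p
  refine le_antisymm (H.stH_le_side hls (H.ratio_key hls h1 h2 ha hb hμ) p)
    (H.stH_le_side hls (H.ratio_key hls h2 h1 hb ha hμ.symm) p)

end MeasureAlgebra
namespace MeasureAlgebra

open SpecAux

lemma smul_mod_two (M : MeasureAlgebra) (k : ℕ) (c : M.carrier) :
    (k % 2) • c = k • c := by
  conv_rhs => rw [← Nat.div_add_mod k 2, add_smul, mul_comm, mul_smul]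
  have h2 : (2 : ℕ) • c = 0 := by
    rw [two_smul]
    exact M.add_self c
  rw [h2, smul_zero, zero_add]

lemma neg_eq (M : MeasureAlgebra) (c : M.carrier) : -c = c :=
  neg_eq_of_add_eq_zero_left (M.add_self c)

lemma zmod2_val_mul : ∀ u v : ZMod 2, (u * v).val = u.val * v.val := by decide

lemma zmod2_val_cases : ∀ u : ZMod 2, u.val = 0 ∨ u.val = 1 := by decide

lemma zmod2_add_eq_zero : ∀ u v : ZMod 2, u + v = 0 → u = v := by decide

variable (H : MeasureAlgebra)

lemma mem_D_of_div {h : H.carrier} (hh : h ≠ 0) {n : ℕ} (hn : 0 < n)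
    (hdiv : H.Div h n) : n ∈ (H.corner h).D := by
  classical
  obtain ⟨f, hf1, hf2, hf3, hf4⟩ := hdiv
  have hμh : 0 < H.mu h := H.mu_pos hh
  let F : Fin n → (H.corner h).carrier := fun i => ⟨f i, hf1 i⟩
  let ψ : V n → (H.corner h).carrier := fun x => ∑ i, (x i).val • F i
  -- value homomorphism
  let VH : (H.corner h).carrier →+ H.carrier := AddMonoidHom.mk' (fun c => c.1)
    (fun a b => rfl)
  have hval : ∀ x, (ψ x).1 = ∑ i, (x i).val • f i := by
    intro x
    show VH (∑ i, (x i).val • F i) = _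
    rw [map_sum]
    refine Finset.sum_congr rfl fun i _ => ?_
    rw [AddMonoidHom.map_nsmul]
    rfl
  have hψadd : ∀ x y, ψ (x + y) = ψ x + ψ y := by
    intro x y
    show ∑ i, ((x i + y i).val) • F i = _
    rw [← Finset.sum_add_distrib]
    refine Finset.sum_congr rfl fun i _ => ?_
    rw [ZMod.val_add, smul_mod_two, add_smul]
  have hψzero : ψ 0 = 0 := by
    show ∑ i, ((0 : ZMod 2)).val • F i = 0
    simp
  have hFij : ∀ i j, i ≠ j → F i * F j = 0 := fun i j hij => Subtype.ext (hf2 i j hij)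
  have hFii : ∀ i, F i * F i = F i := fun i => Subtype.ext (H.idem (f i))
  have hψmul : ∀ x y, ψ (x * y) = ψ x * ψ y := by
    intro x y
    show ∑ i, ((x i * y i).val) • F i = (∑ i, (x i).val • F i) * (∑ j, (y j).val • F j)
    rw [Finset.sum_mul_sum]
    refine Finset.sum_congr rfl fun i _ => ?_
    rw [Finset.sum_eq_single i]
    · rw [smul_mul_assoc, mul_smul_comm, hFii i, smul_smul, zmod2_val_mul]
    · intro j _ hji
      rw [smul_mul_assoc, mul_smul_comm, hFij i j (fun e => hji e.symm), smul_zero,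
        smul_zero]
    · intro hi; exact absurd (Finset.mem_univ i) hi
  have hμψ : ∀ x, (H.corner h).mu (ψ x) = (w x : ℝ) / n := by
    intro x
    have horth : ∀ i ∈ Finset.univ, ∀ j ∈ Finset.univ, i ≠ j →
        ((x i).val • f i) * ((x j).val • f j) = 0 := by
      intro i _ j _ hij
      rw [smul_mul_assoc, mul_smul_comm, hf2 i j hij, smul_zero, smul_zero]
    have h1 : (H.corner h).mu (ψ x) = H.mu (ψ x).1 / H.mu h := rfl
    rw [h1, hval, H.mu_sum Finset.univ _ horth]
    have h2 : ∀ i, H.mu ((x i).val • f i) = ((x i).val : ℝ) * (H.mu h / n) := by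
      intro i
      rcases zmod2_val_cases (x i) with hv | hv <;> rw [hv]
      · rw [zero_smul]
        simp [(H.mu_eq_zero_iff 0).mpr rfl]
      · rw [one_smul, hf4 i]
        simp
    rw [Finset.sum_congr rfl fun i _ => h2 i, ← Finset.sum_mul]
    have h3 : (∑ i, ((x i).val : ℝ)) = (w x : ℝ) := by rw [w]; push_cast; ring
    rw [h3]
    field_simp
  have hψinj : Function.Injective ψ := by
    intro x y hxy
    have h0 : ψ (x + y) = 0 := by
      rw [hψadd, hxy, (H.corner h).add_self]
    have hμ0 : (H.corner h).mu (ψ (x + y)) = 0 := by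
      rw [h0]; exact ((H.corner h).mu_eq_zero_iff 0).mpr rfl
    rw [hμψ] at hμ0
    have : (w (x + y) : ℝ) = 0 := by
      have hn0 : (n:ℝ) ≠ 0 := by positivity
      field_simp at hμ0
      exact_mod_cast hμ0
    have hw0 : w (x + y) = 0 := by exact_mod_cast this
    have := eq_zero_of_w_eq_zero hw0
    funext i
    exact zmod2_add_eq_zero (x i) (y i) (congrFun this i)
  let S : NonUnitalSubring (H.corner h).carrier :=
    { carrier := Set.range ψ
      zero_mem' := ⟨0, hψzero⟩
      add_mem' := by
        rintro a b ⟨x, rfl⟩ ⟨y, rfl⟩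
        exact ⟨x + y, hψadd x y⟩
      neg_mem' := by
        rintro a ⟨x, rfl⟩
        exact ⟨x, ((H.corner h).neg_eq (ψ x)).symm⟩
      mul_mem' := by
        rintro a b ⟨x, rfl⟩ ⟨y, rfl⟩
        exact ⟨x * y, hψmul x y⟩ }
  have hmemS : ∀ x : V n, ψ x ∈ S := fun x => ⟨x, rfl⟩
  -- the identity
  have hψone : (ψ 1).1 = h := by
    rw [hval]
    have : ∀ i : Fin n, ((1 : V n) i).val • f i = f i := by
      intro i
      show ((1 : ZMod 2)).val • f i = f i
      have : ((1 : ZMod 2)).val = 1 := rfl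
      rw [this, one_smul]
    rw [Finset.sum_congr rfl fun i _ => this i, hf3]
  have hψone_id : ∀ c : (H.corner h).carrier, ψ 1 * c = c := by
    intro c
    apply Subtype.ext
    show (ψ 1).1 * c.1 = c.1
    rw [hψone]
    exact c.2
  -- the ring equivalence
  let T : V n → ↥S := fun x => ⟨ψ x, hmemS x⟩
  have hTbij : Function.Bijective T := by
    constructor
    · intro x y hxy
      exact hψinj (congrArg Subtype.val hxy)
    · rintro ⟨c, hc⟩
      obtain ⟨x, hx⟩ := hc
      exact ⟨x, Subtype.ext hx⟩
  let E0 : V n ≃ ↥S := Equiv.ofBijective T hTbij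
  let E : V n ≃+* ↥S :=
    { E0 with
      map_add' := fun x y => Subtype.ext (hψadd x y)
      map_mul' := fun x y => Subtype.ext (hψmul x y) }
  refine ⟨S, ⟨ψ 1, hmemS 1, hψone_id⟩, E.symm, ?_⟩
  intro a
  obtain ⟨x, rfl⟩ := E.surjective a
  have hs : E.symm (E x) = x := E.symm_apply_apply x
  have hl : (St n).mu (E.symm (E x)) = (St n).mu x := congrArg (St n).mu hs
  have hr : ((H.corner h).restrict S).mu (E x) = (w x : ℝ) / n := hμψ x
  have hx : (St n).mu x = (w x : ℝ) / n := by
    show (∑ i, ((x i).val : ℝ)) / n = (w x : ℝ) / n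
    congr 1
    rw [w]; push_cast; ring
  exact hl.trans (hx.trans hr.symm)

lemma div_of_mem_D {h : H.carrier} (hh : h ≠ 0) {n : ℕ} (hn : n ∈ (H.corner h).D) :
    0 < n ∧ H.Div h n := by
  classical
  obtain ⟨S, ⟨e, heS, he⟩, φ, hφ⟩ := hn
  have hμh : 0 < H.mu h := H.mu_pos hh
  have hmemh : h ∈ H.cornerSubring h := H.idem h
  let hc : (H.corner h).carrier := ⟨h, hmemh⟩
  -- e = h
  have heval : e.1 = h := by
    have h1 : e * hc = hc := he hc
    have h2 : e.1 * h = h := congrArg Subtype.val h1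
    have h3 : h * e.1 = e.1 := e.2
    calc e.1 = h * e.1 := h3.symm
      _ = e.1 * h := mul_comm _ _
      _ = h := h2
  rcases Nat.eq_zero_or_pos n with rfl | hnpos
  · exfalso
    have hsub : Subsingleton (St 0).carrier := ⟨fun a b => funext fun i => i.elim0⟩
    have h0 : (⟨e, heS⟩ : ↥S) = 0 := φ.injective (@Subsingleton.elim _ hsub _ _)
    have h1 : e = 0 := congrArg Subtype.val h0
    have h2 : e.1 = 0 := congrArg Subtype.val h1
    rw [heval] at h2
    exact hh h2
  refine ⟨hnpos, ?_⟩
  let sg : Fin n → (St n).carrier := fun i => single i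
  let g : Fin n → ↥S := fun i => φ.symm (sg i)
  let f : Fin n → H.carrier := fun i => (g i).1.1
  have hsingle_mul : ∀ i j : Fin n, i ≠ j → sg i * sg j = 0 := by
    intro i j hij
    funext m
    show (if m = i then (1 : ZMod 2) else 0) * (if m = j then 1 else 0) = 0
    by_cases hmi : m = i
    · have hmj : ¬ (m = j) := fun hmj => hij (by rw [← hmi, hmj])
      rw [if_neg hmj, mul_zero]
    · rw [if_neg hmi, zero_mul]
  let v1 : (St n).carrier := fun _ => 1
  have hsingle_sum : ∑ i, sg i = v1 := by
    funext m
    show (∑ i, single i) m = 1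
    rw [Finset.sum_apply]
    have he1 : ∀ i : Fin n, single i m = if m = i then 1 else 0 := fun i => rfl
    rw [Finset.sum_congr rfl fun i _ => he1 i, Finset.sum_ite_eq]
    simp
  -- φ.symm v1 is the unit of S
  let u : ↥S := φ.symm v1
  have hone_mul : ∀ v : (St n).carrier, v1 * v = v := by
    intro v; funext m; exact one_mul (v m)
  have hφu : φ u = v1 := φ.apply_symm_apply v1
  have hu_id : ∀ s : ↥S, u * s = s := by
    intro s
    apply φ.injective
    calc φ (u * s) = φ u * φ s := map_mul φ u s
      _ = v1 * φ s := by rw [hφu]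
      _ = φ s := hone_mul (φ s)
  have hu_eq : u = (⟨e, heS⟩ : ↥S) := by
    have h1 : u * ⟨e, heS⟩ = ⟨e, heS⟩ := hu_id _
    have h2 : u.1.1 * e.1 = e.1 := congrArg (fun s : ↥S => s.1.1) h1
    have h3 : e * u.1 = u.1 := he _
    have h4 : e.1 * u.1.1 = u.1.1 := congrArg Subtype.val h3
    apply Subtype.ext
    apply Subtype.ext
    show u.1.1 = e.1
    calc u.1.1 = e.1 * u.1.1 := h4.symm
      _ = u.1.1 * e.1 := mul_comm _ _
      _ = e.1 := h2
  -- value homomorphisms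
  let VH1 : ↥S →+ (H.corner h).carrier := AddMonoidHom.mk' (fun c => c.1) (fun a b => rfl)
  let VH2 : (H.corner h).carrier →+ H.carrier := AddMonoidHom.mk' (fun c => c.1)
    (fun a b => rfl)
  refine ⟨f, ?_, ?_, ?_, ?_⟩
  · intro i
    exact (g i).1.2
  · intro i j hij
    have h1 : g i * g j = 0 := by
      calc g i * g j = (show ↥S from φ.symm (sg i * sg j)) := (map_mul φ.symm (sg i) (sg j)).symm
        _ = (show ↥S from φ.symm 0) := by
          show φ.symm (sg i * sg j) = φ.symm 0; rw [hsingle_mul i j hij]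
        _ = 0 := map_zero φ.symm
    exact congrArg (fun s : ↥S => s.1.1) h1
  · have h1 : ∑ i, g i = u := by
      calc ∑ i, g i = (show ↥S from φ.symm (∑ i, sg i)) := (map_sum φ.symm sg Finset.univ).symm
        _ = u := by show φ.symm (∑ i, sg i) = u; rw [hsingle_sum]
    have h2 : (VH2 (VH1 (∑ i, g i))) = VH2 (VH1 u) := by rw [h1]
    rw [map_sum, map_sum] at h2
    have h3 : VH2 (VH1 u) = h := by
      rw [hu_eq]
      show e.1 = h
      exact heval
    rw [← h3]
    exact h2
  · intro i
    have h1 := hφ (g i)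
    rw [show φ (g i) = sg i from φ.apply_symm_apply _] at h1
    have h2 : (St n).mu (sg i) = 1 / (n : ℝ) := by
      show (∑ m, ((single i m).val : ℝ)) / n = 1 / n
      congr 1
      have h4 : (∑ m, ((single i m).val : ℝ)) = ((w (single i) : ℕ) : ℝ) := by
        rw [w]; push_cast; ring
      rw [h4, w_single]
      norm_num
    have h3 : ((H.corner h).restrict S).mu (g i) = H.mu (f i) / H.mu h := rfl
    rw [h2, h3] at h1
    have hn0 : (n : ℝ) ≠ 0 := by positivity
    field_simp at h1 ⊢
    linarith

end MeasureAlgebra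
namespace MeasureAlgebra

open SteinitzNumber

variable (H : MeasureAlgebra)

lemma D_corner_eq {h : H.carrier} (hh : h ≠ 0) : (H.corner h).D = H.DS h := by
  ext n
  exact ⟨fun hn => H.div_of_mem_D hh hn, fun ⟨hp, hd⟩ => H.mem_D_of_div hh hp hd⟩

lemma st_corner {h : H.carrier} (hh : h ≠ 0) : (H.corner h).st = H.stH h := by
  funext p
  show ⨆ n ∈ (H.corner h).D, (n.factorization p : ℕ∞) = ⨆ n ∈ H.DS h, (n.factorization p : ℕ∞)
  rw [H.D_corner_eq hh]

lemma spec_eq : H.Spec = {s | ∃ h : H.carrier, h ≠ 0 ∧ H.stH h = s} := by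
  ext s
  constructor
  · rintro ⟨h, hh, rfl⟩
    exact ⟨h, hh, (H.st_corner hh).symm⟩
  · rintro ⟨h, hh, rfl⟩
    exact ⟨h, hh, H.st_corner hh⟩

lemma cnt_pos_of_ne_zero {β : ℝ} (hβ : 0 < β) {c : ℕ} {h : H.carrier} (hh : h ≠ 0)
    (hμ : H.mu h = β * c) : 0 < c := by
  rcases Nat.eq_zero_or_pos c with rfl | hc
  · exfalso
    have := H.mu_pos hh
    rw [hμ] at this
    simp at this
  · exact hc

end MeasureAlgebra

/-- **Lemma 5.** The spectrum of a countable locally standard measure algebra is a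
saturated set of Steinitz numbers. -/
theorem spec_saturated
    (H : MeasureAlgebra) (hc : Countable H.carrier) (hls : H.LocallyStandard) :
    SteinitzNumber.Saturated H.Spec := by
  classical
  rw [H.spec_eq]
  refine ⟨?_, ?_, ?_⟩
  -- (1) rational connectedness
  · rintro s₁ ⟨h₁, hh₁, rfl⟩ s₂ ⟨h₂, hh₂, rfl⟩
    obtain ⟨β, cnt, hβ, hc1, hc2, hc3⟩ := H.master hls {h₁, h₂}
    have h1t : h₁ ∈ ({h₁, h₂} : Finset H.carrier) := Finset.mem_insert_self _ _
    have h2t : h₂ ∈ ({h₁, h₂} : Finset H.carrier) :=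
      Finset.mem_insert_of_mem (Finset.mem_singleton_self _)
    have e1 := hc1 h₁ h1t
    have e2 := hc1 h₂ h2t
    have ha : 0 < cnt h₁ := H.cnt_pos_of_ne_zero hβ hh₁ e1
    have hb : 0 < cnt h₂ := H.cnt_pos_of_ne_zero hβ hh₂ e2
    have hμ : (cnt h₂ : ℝ) * H.mu h₁ = (cnt h₁ : ℝ) * H.mu h₂ := by
      rw [e1, e2]; ring
    have := H.stH_ratio hls hh₁ hh₂ ha hb hμ
    exact ⟨cnt h₂, cnt h₁, hb, ha, this⟩
  -- (2) finite divisibility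
  · rintro s₂ ⟨h, hh, rfl⟩ s₁ ⟨b, ⟨hbpos, hbdvd⟩, hbeq⟩
    have hbDS : b ∈ H.DS h := H.natdvd_mem_DS hls hbpos hbdvd
    obtain ⟨-, f, hf1, hf2, hf3, hf4⟩ := hbDS
    set h' : H.carrier := f ⟨0, hbpos⟩ with hh'
    have hμh' : H.mu h' = H.mu h / b := hf4 _
    have hh'0 : h' ≠ 0 := by
      intro h0
      have h1 : H.mu h' = 0 := (H.mu_eq_zero_iff h').mpr h0
      rw [hμh'] at h1
      have h2 := H.mu_pos hh
      have hb0 : (0:ℝ) < b := by exact_mod_cast hbpos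
      rw [div_eq_zero_iff] at h1
      rcases h1 with h1 | h1 <;> linarith
    have hμ : ((1:ℕ) : ℝ) * H.mu h = (b : ℝ) * H.mu h' := by
      rw [hμh']
      have hb0 : (b:ℝ) ≠ 0 := by positivity
      field_simp
      simp
    have hr := H.stH_ratio hls hh hh'0 hbpos one_pos hμ
    -- hr : ofNat b * stH h' = ofNat 1 * stH h
    rw [SteinitzNumber.ofNat_one_mul] at hr
    have hcancel : H.stH h' = s₁ := by
      apply SteinitzNumber.cancel hbpos.ne' (s := H.stH h') (t := s₁)
      rw [hr, ← hbeq]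
    exact ⟨h', hh'0, hcancel⟩
  -- (3) interpolation
  · rintro s ⟨h, hh, rfl⟩ n ⟨g, hg, hgeq⟩ k hk1 hkn
    have hnpos : 0 < n := lt_of_lt_of_le hk1 hkn
    have hnd : ∀ p : Nat.Primes, (n.factorization p : ℕ∞) ≤ H.stH g p := by
      intro p
      have : H.stH g p = (n.factorization p : ℕ∞) + H.stH h p := congrFun hgeq p
      rw [this]
      exact le_self_add
    have hnDS : n ∈ H.DS g := H.natdvd_mem_DS hls hnpos hnd
    obtain ⟨-, f, hf1, hf2, hf3, hf4⟩ := hnDS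
    set h'' : H.carrier := ∑ i : Fin k, f (Fin.castLE hkn i) with hh''
    have hμg : 0 < H.mu g := H.mu_pos hg
    have hμh'' : H.mu h'' = k * (H.mu g / n) := by
      rw [hh'', H.mu_sum]
      · rw [Finset.sum_congr rfl fun i _ => hf4 (Fin.castLE hkn i)]
        rw [Finset.sum_const, Finset.card_univ, Fintype.card_fin, nsmul_eq_mul]
      · intro i _ j _ hij
        exact hf2 _ _ (fun e => hij (Fin.castLE_injective hkn e))
    have hh''0 : h'' ≠ 0 := by
      intro h0
      have h1 : H.mu h'' = 0 := (H.mu_eq_zero_iff h'').mpr h0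
      rw [hμh''] at h1
      have hk0 : (0:ℝ) < k := by exact_mod_cast hk1
      have hn0 : (0:ℝ) < n := by exact_mod_cast hnpos
      have : (0:ℝ) < k * (H.mu g / n) := by positivity
      linarith
    have hμ : (k : ℝ) * H.mu g = (n : ℝ) * H.mu h'' := by
      rw [hμh'']
      have hn0 : (n:ℝ) ≠ 0 := by positivity
      field_simp
    have hr := H.stH_ratio hls hg hh''0 hnpos hk1 hμ
    -- hr : ofNat n * stH h'' = ofNat k * stH g
    rw [hgeq] at hr
    have hcomm : SteinitzNumber.ofNat k * (SteinitzNumber.ofNat n * H.stH h) =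
        SteinitzNumber.ofNat n * (SteinitzNumber.ofNat k * H.stH h) := by
      rw [← SteinitzNumber.mul_assoc', ← SteinitzNumber.mul_assoc',
        SteinitzNumber.mul_comm' (SteinitzNumber.ofNat k) (SteinitzNumber.ofNat n)]
    rw [hcomm] at hr
    have hcancel : H.stH h'' = SteinitzNumber.ofNat k * H.stH h :=
      SteinitzNumber.cancel hnpos.ne' hr
    exact ⟨h'', hh''0, hcancel⟩
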